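/- Let n, n1, n2 be positive integers, F1 an n×n1 real matrix, F2 an n×n2 real matrix, D any n×n real matrix, and Σf a positive definite (n1+n2)×(n1+n2) real matrix with block decomposition Σf = [[Σ11, Σ12],[Σ21, Σ22]] (Σ11 is n1×n1, Σ22 is n2×n2). Define Ω = Σ11 − Σ12 Σ22⁻¹ Σ21 and G2 = F1 Σ12 Σ22^{−1/2} + F2 Σ22^{1/2}. Then Ω is positive definite and [F1 F2] Σf [F1 F2]ᵀ + D = [F1 G2] · [[Ω, 0],[0, I_{n2}]] · [F1 G2]ᵀ + D, where [A B] denotes the horizontal concatenation of matrices A and B. Consequently, every covariance model of the form [F1 F2] Σf [F1 F2]ᵀ + D with Σf positive definite can be written in the form [F1 G2] · [[Ω, 0],[0, I]] · [F1 G2]ᵀ + D with Ω positive definite. -/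

import Mathlib

open Matrix

lemma schur_posDef_aux (n1 n2 : ℕ)
    (S11 : Matrix (Fin n1) (Fin n1) ℝ) (S12 : Matrix (Fin n1) (Fin n2) ℝ)
    (S21 : Matrix (Fin n2) (Fin n1) ℝ) (S22 : Matrix (Fin n2) (Fin n2) ℝ)
    (hSf : (Matrix.fromBlocks S11 S12 S21 S22).PosDef) :
    (S11 - S12 * S22⁻¹ * S21).PosDef := by
  classical
  obtain ⟨h11, h12, h21, h22⟩ := Matrix.isHermitian_fromBlocks_iff.mp hSf.1
  have hS22 : S22.PosDef := by
    rw [posDef_iff_dotProduct_mulVec]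
    constructor
    · exact h22
    · intro y hy
      have := (posDef_iff_dotProduct_mulVec.mp hSf).2 (x := Sum.elim 0 y) (by
        simp only [ne_eq, funext_iff, not_forall] at hy ⊢
        obtain ⟨i, hi⟩ := hy
        exact ⟨Sum.inr i, by simpa using hi⟩)
      simpa [Matrix.fromBlocks_mulVec, Function.star_sumElim, dotProduct] using this
  haveI := hS22.isUnit.invertible
  subst h12
  rw [posDef_iff_dotProduct_mulVec]
  constructor
  · exact (Matrix.IsHermitian.fromBlocks₂₂ S11 S12 h22).mp hSf.1
  · intro x hx
    have key := Matrix.schur_complement_eq₂₂ S11 S12 x (-((S22⁻¹ * S12ᴴ) *ᵥ x)) h22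
    have := (posDef_iff_dotProduct_mulVec.mp hSf).2 (x := Sum.elim x (-((S22⁻¹ * S12ᴴ) *ᵥ x))) (by
      simp only [ne_eq, funext_iff, not_forall] at hx ⊢
      obtain ⟨i, hi⟩ := hx
      exact ⟨Sum.inl i, by simpa using hi⟩)
    rw [dotProduct_mulVec] at this
    rw [show (Sum.elim x (-((S22⁻¹ * S12ᴴ) *ᵥ x))) = (x ⊕ᵥ (-((S22⁻¹ * S12ᴴ) *ᵥ x))) from rfl,
      key] at this
    rw [dotProduct_mulVec]
    simpa using this

lemma cov_rewrite_aux (n n1 n2 : ℕ)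
    (F1 : Matrix (Fin n) (Fin n1) ℝ) (F2 : Matrix (Fin n) (Fin n2) ℝ)
    (D : Matrix (Fin n) (Fin n) ℝ)
    (S11 : Matrix (Fin n1) (Fin n1) ℝ) (S12 : Matrix (Fin n1) (Fin n2) ℝ)
    (S21 : Matrix (Fin n2) (Fin n1) ℝ) (S22 : Matrix (Fin n2) (Fin n2) ℝ)
    (hS21 : S21 = S12ᵀ)
    (R : Matrix (Fin n2) (Fin n2) ℝ) (hR : R.PosDef) (hRR : R * R = S22) :
      Matrix.fromCols F1 F2 * Matrix.fromBlocks S11 S12 S21 S22 *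
          (Matrix.fromCols F1 F2)ᵀ + D =
        Matrix.fromCols F1 (F1 * S12 * R⁻¹ + F2 * R) *
            Matrix.fromBlocks (S11 - S12 * S22⁻¹ * S21) 0 0 (1 : Matrix (Fin n2) (Fin n2) ℝ) *
            (Matrix.fromCols F1 (F1 * S12 * R⁻¹ + F2 * R))ᵀ + D := by
  classical
  haveI : Invertible R := hR.isUnit.invertible
  have hRsymm : Rᵀ = R := hR.1
  have hRdet : IsUnit R.det := isUnit_iff_isUnit_det R |>.mp hR.isUnit
  have hRinvsymm : (R⁻¹)ᵀ = R⁻¹ := by rw [transpose_nonsing_inv, hRsymm]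
  have hS22inv : S22⁻¹ = R⁻¹ * R⁻¹ := by rw [← hRR, Matrix.mul_inv_rev]
  have hRR1 : R * R⁻¹ = 1 := Matrix.mul_nonsing_inv R hRdet
  have hR1R : R⁻¹ * R = 1 := Matrix.nonsing_inv_mul R hRdet
  congr 1
  rw [transpose_fromCols, transpose_fromCols, fromCols_mul_fromBlocks,
    fromCols_mul_fromBlocks, fromCols_mul_fromRows, fromCols_mul_fromRows]
  subst hS21 hRR
  simp only [Matrix.mul_zero, Matrix.zero_mul, Matrix.mul_one, add_zero, zero_add,
    transpose_add, transpose_mul, hRsymm, hRinvsymm, hS22inv]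
  simp only [Matrix.mul_sub, Matrix.sub_mul, Matrix.mul_add, Matrix.add_mul, Matrix.mul_assoc,
    hRR1, hR1R]
  simp only [← Matrix.mul_assoc, hRR1]
  simp only [Matrix.mul_assoc, Matrix.mul_one]
  rw [show R⁻¹ * (R * F2ᵀ) = F2ᵀ by rw [← Matrix.mul_assoc, hR1R, Matrix.one_mul]]
  abel

/-- Every extended covariance model `[F1 F2] Σf [F1 F2]ᵀ + D` with `Σf`
positive definite can be rewritten as `[F1 G2] [[Ω,0],[0,I]] [F1 G2]ᵀ + D`, where
`Ω = S11 - S12 S22⁻¹ S21` is positive definite (the Schur complement of `S22` in `Σf`)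
and `G2 = F1 S12 S22^{-1/2} + F2 S22^{1/2}`, with `R` the positive definite square root
of `S22` (so `S22^{1/2} = R` and `S22^{-1/2} = R⁻¹`). -/
theorem stmt1 (n n1 n2 : ℕ) (hn : 0 < n) (hn1 : 0 < n1) (hn2 : 0 < n2)
    (F1 : Matrix (Fin n) (Fin n1) ℝ) (F2)
    (D : Matrix (Fin n) (Fin n) ℝ)
    (S11 : Matrix (Fin n1) (Fin n1) ℝ) (S12 : Matrix (Fin n1) (Fin n2) ℝ)
    (S21 : Matrix (Fin n2) (Fin n1) ℝ) (S22 : Matrix (Fin n2) (Fin n2) ℝ)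
    (hSf : (Matrix.fromBlocks S11 S12 S21 S22).PosDef)
    (R : Matrix (Fin n2) (Fin n2) ℝ) (hR : R.PosDef) (hRR : R * R = S22) :
    (S11 - S12 * S22⁻¹ * S21).PosDef ∧
      Matrix.fromCols F1 F2 * Matrix.fromBlocks S11 S12 S21 S22 *
          (Matrix.fromCols F1 F2)ᵀ + D =
        Matrix.fromCols F1 (F1 * S12 * R⁻¹ + F2 * R) *
            Matrix.fromBlocks (S11 - S12 * S22⁻¹ * S21) 0 0 (1 : Matrix (Fin n2) (Fin n2) ℝ) *
            (Matrix.fromCols F1 (F1 * S12 * R⁻¹ + F2 * R))ᵀ + D := by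
  obtain ⟨h11, h12, h21, h22⟩ := Matrix.isHermitian_fromBlocks_iff.mp hSf.1
  have hS21 : S21 = S12ᵀ := by
    rw [← h12]; ext i j; simp [conjTranspose_apply]
  exact ⟨schur_posDef_aux n1 n2 S11 S12 S21 S22 hSf,
    cov_rewrite_aux n n1 n2 F1 F2 D S11 S12 S21 S22 hS21 R hR hRR⟩
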